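/- Let M, N be positive integers, R a constant N×N real matrix and Q a constant N×M real matrix. Let X : ℝ³ → (N×N real matrices) be infinitely differentiable with X(x,y,t) invertible for all (x,y,t) and satisfying X_y = X_xx and X_t = X_xxx, and suppose there is an infinitely differentiable Y : ℝ³ → (M×N real matrices) with X_x = R·X + Q·Y. Then ψ := Q·Y·X⁻¹ satisfies the N×N matrix pKP equation with the ordinary matrix product: ∂_x(4ψ_t − ψ_xxx − 6 ψ_x ψ_x) = 3ψ_yy − 6(ψ_x ψ_y − ψ_y ψ_x). -/

import Mathlib

attribute [local instance] Matrix.normedAddCommGroup Matrix.normedSpace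

/-- Partial derivative in the `x`-direction of a function of three real variables. -/
noncomputable def pdx {E : Type*} [NormedAddCommGroup E] [NormedSpace ℝ E]
    (f : ℝ × ℝ × ℝ → E) : ℝ × ℝ × ℝ → E :=
  fun p => fderiv ℝ f p (1, 0, 0)

/-- Partial derivative in the `y`-direction of a function of three real variables. -/
noncomputable def pdy {E : Type*} [NormedAddCommGroup E] [NormedSpace ℝ E]
    (f : ℝ × ℝ × ℝ → E) : ℝ × ℝ × ℝ → E :=
  fun p => fderiv ℝ f p (0, 1, 0)

/-- Partial derivative in the `t`-direction of a function of three real variables. -/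
noncomputable def pdt {E : Type*} [NormedAddCommGroup E] [NormedSpace ℝ E]
    (f : ℝ × ℝ × ℝ → E) : ℝ × ℝ × ℝ → E :=
  fun p => fderiv ℝ f p (0, 0, 1)

namespace KPAux

/-- Formal expressions in the derivatives `D n` of `X` and `V = X⁻¹`. -/
inductive Expr where
  | D : ℕ → Expr
  | V : Expr
  | mul : Expr → Expr → Expr
  | neg : Expr → Expr
  | add : Expr → Expr → Expr

/-- Formal derivative with shift `s` (`s = 1,2,3` for `x,y,t`). -/
def Expr.der (s : ℕ) : Expr → Expr
  | .D n => .D (n + s)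
  | .V => .neg (.mul (.mul .V (.D s)) .V)
  | .mul a b => .add (.mul (a.der s) b) (.mul a (b.der s))
  | .neg a => .neg (a.der s)
  | .add a b => .add (a.der s) (b.der s)

variable {E A : Type*} [NormedAddCommGroup E] [NormedSpace ℝ E]
  [NormedAddCommGroup A] [NormedSpace ℝ A]

variable (m : A →L[ℝ] A →L[ℝ] A)

noncomputable def Expr.eval (Df : ℕ → E → A) (Vf : E → A) : Expr → E → A
  | .D n => Df n
  | .V => Vf
  | .mul a b => fun p => m (a.eval Df Vf p) (b.eval Df Vf p)
  | .neg a => fun p => -(a.eval Df Vf p)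
  | .add a b => fun p => a.eval Df Vf p + b.eval Df Vf p

theorem pd_mul {f g : E → A} {p : E} (hf : DifferentiableAt ℝ f p)
    (hg : DifferentiableAt ℝ g p) (w : E) :
    fderiv ℝ (fun q => m (f q) (g q)) p w
      = m (fderiv ℝ f p w) (g p) + m (f p) (fderiv ℝ g p w) := by
  have h : HasFDerivAt (fun q => m (f q) (g q))
      ((m.isBoundedBilinearMap.deriv (f p, g p)).comp
        ((fderiv ℝ f p).prod (fderiv ℝ g p))) p :=
    HasFDerivAt.comp (f := fun q => (f q, g q)) p (m.isBoundedBilinearMap.hasFDerivAt (f p, g p))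
      (hf.hasFDerivAt.prodMk hg.hasFDerivAt)
  rw [h.fderiv]
  simp only [ContinuousLinearMap.coe_comp', Function.comp_apply,
    ContinuousLinearMap.prod_apply, IsBoundedBilinearMap.deriv_apply]
  abel

theorem contDiff_mul {n : WithTop ℕ∞} {f g : E → A} (hf : ContDiff ℝ n f)
    (hg : ContDiff ℝ n g) : ContDiff ℝ n (fun q => m (f q) (g q)) :=
  m.isBoundedBilinearMap.contDiff.comp (hf.prodMk hg)

theorem contDiff_pd {f : E → A} (hf : ContDiff ℝ (⊤ : ℕ∞) f) (w : E) :
    ContDiff ℝ (⊤ : ℕ∞) (fun q => fderiv ℝ f q w) :=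
  (hf.fderiv_right (by norm_cast)).clm_apply contDiff_const

theorem pd_comm {f : E → A} (hf : ContDiff ℝ (⊤ : ℕ∞) f) (v w : E) (p : E) :
    fderiv ℝ (fun q => fderiv ℝ f q v) p w = fderiv ℝ (fun q => fderiv ℝ f q w) p v := by
  have hd : DifferentiableAt ℝ (fderiv ℝ f) p :=
    ((hf.fderiv_right (m := 1) (by norm_cast)).differentiable (by norm_cast)) p
  have key : ∀ u : E, fderiv ℝ (fun q => fderiv ℝ f q u) p
      = (fderiv ℝ (fderiv ℝ f) p).flip u := by
    intro u
    rw [fderiv_clm_apply hd (differentiableAt_const u)]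
    simp
  rw [key v, key w]
  have hsym := (hf.contDiffAt (x := p)).isSymmSndFDerivAt (by rw [minSmoothness_of_isRCLikeNormedField]; exact le_trans (le_of_eq (by norm_cast)) (WithTop.coe_le_coe.2 (le_top : (2:ℕ∞) ≤ ⊤)))
  simpa using (hsym w v)

section Eval
variable {Df : ℕ → E → A} {Vf : E → A}

theorem eval_contDiff (hD : ∀ n, ContDiff ℝ (⊤ : ℕ∞) (Df n))
    (hV : ContDiff ℝ (⊤ : ℕ∞) Vf) : ∀ e : Expr, ContDiff ℝ (⊤ : ℕ∞) (e.eval m Df Vf)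
  | .D n => hD n
  | .V => hV
  | .mul a b => contDiff_mul m (eval_contDiff hD hV a) (eval_contDiff hD hV b)
  | .neg a => (eval_contDiff hD hV a).neg
  | .add a b => (eval_contDiff hD hV a).add (eval_contDiff hD hV b)

theorem eval_pd (hD : ∀ n, ContDiff ℝ (⊤ : ℕ∞) (Df n))
    (hV : ContDiff ℝ (⊤ : ℕ∞) Vf) (w : E) (s : ℕ)
    (hDw : ∀ n p, fderiv ℝ (Df n) p w = Df (n + s) p)
    (hVw : ∀ p, fderiv ℝ Vf p w = -(m (m (Vf p) (Df s p)) (Vf p))) :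
    ∀ (e : Expr) (p : E), fderiv ℝ (e.eval m Df Vf) p w = (e.der s).eval m Df Vf p
  | .D n, p => hDw n p
  | .V, p => by simpa [Expr.eval, Expr.der] using hVw p
  | .mul a b, p => by
    have ha := (eval_contDiff m hD hV a).differentiable (by norm_cast) p
    have hb := (eval_contDiff m hD hV b).differentiable (by norm_cast) p
    simp only [Expr.eval, Expr.der]
    rw [pd_mul m ha hb w, eval_pd hD hV w s hDw hVw a p, eval_pd hD hV w s hDw hVw b p]
  | .neg a, p => by
    simp only [Expr.eval, Expr.der]
    rw [fderiv_fun_neg]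
    simp [eval_pd hD hV w s hDw hVw a p]
  | .add a b, p => by
    have ha := (eval_contDiff m hD hV a).differentiable (by norm_cast) p
    have hb := (eval_contDiff m hD hV b).differentiable (by norm_cast) p
    simp only [Expr.eval, Expr.der]
    rw [fderiv_fun_add ha hb]
    simp [eval_pd hD hV w s hDw hVw a p, eval_pd hD hV w s hDw hVw b p]

end Eval

abbrev BL (A : Type*) [NormedAddCommGroup A] [NormedSpace ℝ A] := A →L[ℝ] A →L[ℝ] A

theorem contDiff_det {N : ℕ} {f : E → Matrix (Fin N) (Fin N) ℝ}
    (h : ∀ i j, ContDiff ℝ (⊤ : ℕ∞) fun p => f p i j) :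
    ContDiff ℝ (⊤ : ℕ∞) fun p => (f p).det := by
  simp only [Matrix.det_apply']
  exact ContDiff.sum fun σ _ => contDiff_const.mul (contDiff_prod fun i _ => h (σ i) i)

end KPAux

open KPAux

/-- Corollary: if `X` solves the heat hierarchy and `X_x = R X + Q Y` for some
smooth `Y`, then `ψ = Q Y X⁻¹` solves the `N × N` matrix pKP equation with the
ordinary matrix product. -/
theorem matrix_pKP_coleHopf_square (M N : ℕ) (hM : 0 < M) (hN : 0 < N)
    (R : Matrix (Fin N) (Fin N) ℝ) (Q : Matrix (Fin N) (Fin M) ℝ)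
    (X : ℝ × ℝ × ℝ → Matrix (Fin N) (Fin N) ℝ)
    (Y : ℝ × ℝ × ℝ → Matrix (Fin M) (Fin N) ℝ)
    (hX : ContDiff ℝ (⊤ : ℕ∞) X) (hY : ContDiff ℝ (⊤ : ℕ∞) Y)
    (hXinv : ∀ p, IsUnit (X p))
    (hX2 : ∀ p, pdy X p = pdx (pdx X) p)
    (hX3 : ∀ p, pdt X p = pdx (pdx (pdx X)) p)
    (hRic : ∀ p, pdx X p = R * X p + Q * Y p)
    (ψ : ℝ × ℝ × ℝ → Matrix (Fin N) (Fin N) ℝ)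
    (hψ : ∀ p, ψ p = Q * Y p * (X p)⁻¹) :
    ∀ p, pdx (fun q => (4 : ℝ) • pdt ψ q - pdx (pdx (pdx ψ)) q
          - (6 : ℝ) • (pdx ψ q * pdx ψ q)) p
        = (3 : ℝ) • pdy (pdy ψ) p
          - (6 : ℝ) • (pdx ψ p * pdy ψ p - pdy ψ p * pdx ψ p) := by
  -- the multiplication as a continuous bilinear map
  let mulL : Matrix (Fin N) (Fin N) ℝ →ₗ[ℝ] Matrix (Fin N) (Fin N) ℝ →L[ℝ] Matrix (Fin N) (Fin N) ℝ :=
    { toFun := fun a => LinearMap.toContinuousLinearMap (LinearMap.mul ℝ (Matrix (Fin N) (Fin N) ℝ) a)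
      map_add' := by intro a b; ext c; simp [add_mul]
      map_smul' := by intro r a; ext c; simp [smul_mul_assoc] }
  let m : BL (Matrix (Fin N) (Fin N) ℝ) := LinearMap.toContinuousLinearMap mulL
  have hm : ∀ a b : Matrix (Fin N) (Fin N) ℝ, m a b = a * b := fun a b => rfl
  -- determinant unit
  have hdetu : ∀ p, IsUnit (X p).det := fun p =>
    (Matrix.isUnit_iff_isUnit_det _).1 (hXinv p)
  set V : ℝ × ℝ × ℝ → Matrix (Fin N) (Fin N) ℝ := fun p => (X p)⁻¹ with hVdef
  have hXV : ∀ p, X p * V p = 1 := fun p => Matrix.mul_nonsing_inv _ (hdetu p)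
  have hVX : ∀ p, V p * X p = 1 := fun p => Matrix.nonsing_inv_mul _ (hdetu p)
  -- entries of X are smooth
  have hXe : ∀ i j, ContDiff ℝ (⊤ : ℕ∞) fun p => X p i j := by
    intro i j
    exact contDiff_pi.1 (contDiff_pi.1 hX i) j
  -- V is smooth
  have hVsm : ContDiff ℝ (⊤ : ℕ∞) V := by
    have hdet : ContDiff ℝ (⊤ : ℕ∞) fun p => (X p).det := contDiff_det hXe
    have hadj : ContDiff ℝ (⊤ : ℕ∞) fun p => (X p).adjugate := by
      apply contDiff_pi.2; intro i; apply contDiff_pi.2; intro j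
      simp only [Matrix.adjugate_apply]
      apply contDiff_det
      intro k l
      simp only [Matrix.updateRow_apply]
      by_cases hkj : k = j
      · subst hkj; simp only [if_pos rfl]; exact contDiff_const
      · simp only [if_neg hkj]; exact hXe k l
    have hVeq : V = fun p => ((X p).det)⁻¹ • (X p).adjugate := by
      funext p
      show (X p)⁻¹ = _
      rw [Matrix.inv_def, Ring.inverse_eq_inv']
    rw [hVeq]
    exact (hdet.inv fun p => (hdetu p).ne_zero).smul hadj
  -- the tower of x-derivatives of X
  set Df : ℕ → ℝ × ℝ × ℝ → Matrix (Fin N) (Fin N) ℝ := fun n => pdx^[n] X with hDf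
  have hD0 : Df 0 = X := rfl
  have hDsucc : ∀ n, Df (n + 1) = pdx (Df n) := fun n => Function.iterate_succ_apply' _ _ _
  have hDsm : ∀ n, ContDiff ℝ (⊤ : ℕ∞) (Df n) := by
    intro n; induction n with
    | zero => exact hX
    | succ n ih => rw [hDsucc n]; exact contDiff_pd ih _
  have hDx : ∀ n p, fderiv ℝ (Df n) p (1, 0, 0) = Df (n + 1) p := by
    intro n p; rw [hDsucc n]; rfl
  have hDy : ∀ n p, fderiv ℝ (Df n) p (0, 1, 0) = Df (n + 2) p := by
    intro n; induction n with
    | zero => intro p; exact hX2 p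
    | succ n ih =>
      intro p
      calc fderiv ℝ (Df (n + 1)) p (0, 1, 0)
          = fderiv ℝ (fun q => fderiv ℝ (Df n) q (1, 0, 0)) p (0, 1, 0) := by
            rw [hDsucc n]; rfl
        _ = fderiv ℝ (fun q => fderiv ℝ (Df n) q (0, 1, 0)) p (1, 0, 0) :=
            pd_comm (hDsm n) _ _ p
        _ = fderiv ℝ (Df (n + 2)) p (1, 0, 0) := by
            rw [show (fun q => fderiv ℝ (Df n) q (0, 1, 0)) = Df (n + 2) from funext ih]
        _ = Df (n + 3) p := hDx _ p
  have hDt : ∀ n p, fderiv ℝ (Df n) p (0, 0, 1) = Df (n + 3) p := by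
    intro n; induction n with
    | zero => intro p; exact hX3 p
    | succ n ih =>
      intro p
      calc fderiv ℝ (Df (n + 1)) p (0, 0, 1)
          = fderiv ℝ (fun q => fderiv ℝ (Df n) q (1, 0, 0)) p (0, 0, 1) := by
            rw [hDsucc n]; rfl
        _ = fderiv ℝ (fun q => fderiv ℝ (Df n) q (0, 0, 1)) p (1, 0, 0) :=
            pd_comm (hDsm n) _ _ p
        _ = fderiv ℝ (Df (n + 3)) p (1, 0, 0) := by
            rw [show (fun q => fderiv ℝ (Df n) q (0, 0, 1)) = Df (n + 3) from funext ih]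
        _ = Df (n + 4) p := hDx _ p
  -- derivative of V
  have hVd : ∀ (p) (w : ℝ × ℝ × ℝ),
      fderiv ℝ V p w = -(V p * fderiv ℝ X p w * V p) := by
    intro p w
    have hconst : (fun q => m (X q) (V q)) = fun _ => (1 : Matrix (Fin N) (Fin N) ℝ) := by
      funext q; rw [hm]; exact hXV q
    have h2 : fderiv ℝ (fun q => m (X q) (V q)) p w = 0 := by
      rw [hconst]; simp
    have h3 := pd_mul m (hX.differentiable (by norm_cast) p)
      (hVsm.differentiable (by norm_cast) p) w
    erw [h2] at h3
    simp only [hm] at h3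
    have h4 : X p * fderiv ℝ V p w = -(fderiv ℝ X p w * V p) :=
      eq_neg_of_add_eq_zero_right h3.symm
    have h5 : fderiv ℝ V p w = V p * (X p * fderiv ℝ V p w) := by
      rw [← mul_assoc, hVX p, one_mul]
    rw [h5, h4]
    simp [mul_neg, mul_assoc]
  have hVx : ∀ p, fderiv ℝ V p (1, 0, 0) = -(m (m (V p) (Df 1 p)) (V p)) := by
    intro p; rw [hVd p, show fderiv ℝ X p (1, 0, 0) = Df 1 p from hDx 0 p]; simp [hm]
  have hVy : ∀ p, fderiv ℝ V p (0, 1, 0) = -(m (m (V p) (Df 2 p)) (V p)) := by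
    intro p; rw [hVd p, show fderiv ℝ X p (0, 1, 0) = Df 2 p from hDy 0 p]; simp [hm]
  have hVt : ∀ p, fderiv ℝ V p (0, 0, 1) = -(m (m (V p) (Df 3 p)) (V p)) := by
    intro p; rw [hVd p, show fderiv ℝ X p (0, 0, 1) = Df 3 p from hDt 0 p]; simp [hm]
  -- evaluation machinery
  have keyx := eval_pd (m := m) hDsm hVsm (1, 0, 0) 1 hDx hVx
  have keyy := eval_pd (m := m) hDsm hVsm (0, 1, 0) 2 hDy hVy
  have keyt := eval_pd (m := m) hDsm hVsm (0, 0, 1) 3 hDt hVt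
  set E0 : Expr := .mul (.D 1) .V with hE0
  have hsmooth : ∀ e : Expr, ContDiff ℝ (⊤ : ℕ∞) (e.eval m Df V) :=
    eval_contDiff m hDsm hVsm
  -- ψ in terms of the evaluation
  have hψf : ψ = fun p => E0.eval m Df V p - R := by
    funext p
    have hQY : Q * Y p = pdx X p - R * X p := eq_sub_of_add_eq' (hRic p).symm
    rw [hψ p, hQY]
    show (pdx X p - R * X p) * V p = E0.eval m Df V p - R
    have : E0.eval m Df V p = Df 1 p * V p := by simp [hE0, Expr.eval, hm]
    rw [this, sub_mul, mul_assoc, hXV p, mul_one]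
    rfl
  -- pointwise identification of all needed derivatives of ψ
  have hpsx : ∀ p, pdx ψ p = (E0.der 1).eval m Df V p := by
    intro p
    show fderiv ℝ ψ p (1, 0, 0) = _
    erw [hψf, fderiv_sub_const]
    exact keyx E0 p
  have hpst : ∀ p, pdt ψ p = (E0.der 3).eval m Df V p := by
    intro p
    show fderiv ℝ ψ p (0, 0, 1) = _
    erw [hψf, fderiv_sub_const]
    exact keyt E0 p
  have hpsy : ∀ p, pdy ψ p = (E0.der 2).eval m Df V p := by
    intro p
    show fderiv ℝ ψ p (0, 1, 0) = _
    erw [hψf, fderiv_sub_const]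
    exact keyy E0 p
  have hpsxx : ∀ p, pdx (pdx ψ) p = ((E0.der 1).der 1).eval m Df V p := by
    intro p
    show fderiv ℝ (pdx ψ) p (1, 0, 0) = _
    rw [show pdx ψ = (E0.der 1).eval m Df V from funext hpsx]
    exact keyx _ p
  have hpsxxx : ∀ p, pdx (pdx (pdx ψ)) p = (((E0.der 1).der 1).der 1).eval m Df V p := by
    intro p
    show fderiv ℝ (pdx (pdx ψ)) p (1, 0, 0) = _
    rw [show pdx (pdx ψ) = ((E0.der 1).der 1).eval m Df V from funext hpsxx]
    exact keyx _ p
  have hpstx : ∀ p, pdx (pdt ψ) p = ((E0.der 3).der 1).eval m Df V p := by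
    intro p
    show fderiv ℝ (pdt ψ) p (1, 0, 0) = _
    rw [show pdt ψ = (E0.der 3).eval m Df V from funext hpst]
    exact keyx _ p
  have hpsyy : ∀ p, pdy (pdy ψ) p = ((E0.der 2).der 2).eval m Df V p := by
    intro p
    show fderiv ℝ (pdy ψ) p (0, 1, 0) = _
    rw [show pdy ψ = (E0.der 2).eval m Df V from funext hpsy]
    exact keyy _ p
  intro p
  -- rewrite the inner function of the LHS
  have hfun : (fun q => (4 : ℝ) • pdt ψ q - pdx (pdx (pdx ψ)) q
        - (6 : ℝ) • (pdx ψ q * pdx ψ q))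
      = fun q => (4 : ℝ) • (E0.der 3).eval m Df V q
        - (((E0.der 1).der 1).der 1).eval m Df V q
        - (6 : ℝ) • (m ((E0.der 1).eval m Df V q) ((E0.der 1).eval m Df V q)) := by
    funext q
    rw [hpst q, hpsxxx q, hpsx q, hm]
  show pdx _ p = _
  rw [hfun]
  -- differentiate the LHS
  have dT : DifferentiableAt ℝ (fun q => (4 : ℝ) • (E0.der 3).eval m Df V q) p :=
    (((hsmooth _).const_smul (4:ℝ)).differentiable (by norm_cast)) p
  have dX3 : DifferentiableAt ℝ ((((E0.der 1).der 1).der 1).eval m Df V) p :=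
    ((hsmooth _).differentiable (by norm_cast)) p
  have dP : DifferentiableAt ℝ
      (fun q => (6 : ℝ) • (m ((E0.der 1).eval m Df V q) ((E0.der 1).eval m Df V q))) p :=
    (((contDiff_mul m (hsmooth _) (hsmooth _)).const_smul (6:ℝ)).differentiable
      (by norm_cast)) p
  have d1 : DifferentiableAt ℝ ((E0.der 1).eval m Df V) p :=
    ((hsmooth _).differentiable (by norm_cast)) p
  have step : pdx (fun q => (4 : ℝ) • (E0.der 3).eval m Df V q
        - (((E0.der 1).der 1).der 1).eval m Df V q
        - (6 : ℝ) • (m ((E0.der 1).eval m Df V q) ((E0.der 1).eval m Df V q))) p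
      = (4 : ℝ) • ((E0.der 3).der 1).eval m Df V p
        - ((((E0.der 1).der 1).der 1).der 1).eval m Df V p
        - (6 : ℝ) • (m (((E0.der 1).der 1).eval m Df V p) ((E0.der 1).eval m Df V p)
            + m ((E0.der 1).eval m Df V p) (((E0.der 1).der 1).eval m Df V p)) := by
    show fderiv ℝ _ p (1, 0, 0) = _
    erw [fderiv_fun_sub (dT.sub dX3) dP, fderiv_fun_sub dT dX3,
      fderiv_const_smul ((hsmooth _).differentiable (by norm_cast) p) (4:ℝ),
      fderiv_const_smul ((contDiff_mul m (hsmooth _) (hsmooth _)).differentiable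
        (by norm_cast) p) (6:ℝ)]
    simp only [ContinuousLinearMap.coe_sub', Pi.sub_apply, ContinuousLinearMap.coe_smul',
      Pi.smul_apply]
    rw [keyx (E0.der 3) p, keyx (((E0.der 1).der 1).der 1) p, pd_mul m d1 d1,
      keyx (E0.der 1) p]
  rw [step, hpsyy p, hpsx p, hpsy p]
  have s4 : ∀ x : Matrix (Fin N) (Fin N) ℝ, (4:ℝ) • x = x + x + x + x := fun x => by module
  have s6 : ∀ x : Matrix (Fin N) (Fin N) ℝ, (6:ℝ) • x = x + x + x + x + x + x := fun x => by module
  have s3 : ∀ x : Matrix (Fin N) (Fin N) ℝ, (3:ℝ) • x = x + x + x := fun x => by module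
  simp only [hm, hE0, Expr.der, Expr.eval, Nat.reduceAdd]
  simp only [s4, s6, s3]
  noncomm_ring
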